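/- Let D be an acyclic bipartite tournament. Then the competition period of D is 1, i.e., C^q(D) = C^{q+1}(D) where q is the competition index of D. -/

import Mathlib

/-- `walkN D n u v` : there is a directed walk of length `n` from `u` to `v` in the digraph `D`. -/
def walkN {V : Type*} (D : V → V → Prop) : ℕ → V → V → Prop
  | 0 => fun u v => u = v
  | n+1 => fun u v => ∃ w, D u w ∧ walkN D n w v

/-- The `m`-step competition graph of the digraph `D`. -/
def cmGraph {V : Type*} (D : V → V → Prop) (m : ℕ) : SimpleGraph V where
  Adj u v := u ≠ v ∧ ∃ z, walkN D m u z ∧ walkN D m v z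
  symm := by
    constructor
    intro u v h
    exact ⟨Ne.symm h.1, h.2.imp fun z hz => ⟨hz.2, hz.1⟩⟩
  loopless := by constructor; intro v h; exact h.1 rfl

/-- Sinks of the subdigraph of `D` induced by `S`. -/
def sinks {V : Type*} (D : V → V → Prop) (S : Set V) : Set V :=
  {v ∈ S | ∀ w ∈ S, ¬ D v w}

/-- The digraph sequence `D_0, D_1, …` (as vertex sets) associated with the sink sequence. -/
def Dseq {V : Type*} (D : V → V → Prop) : ℕ → Set V
  | 0 => Set.univ
  | n+1 => Dseq D n \ sinks D (Dseq D n)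

/-- The sink sequence `W_0, W_1, …` of `D`. -/
def Wseq {V : Type*} (D : V → V → Prop) (n : ℕ) : Set V := sinks D (Dseq D n)

/-- `k` is the sink elimination index `ζ(D)`. -/
def IsSinkElimIndex {V : Type*} (D : V → V → Prop) (k : ℕ) : Prop :=
  (Wseq D k = Dseq D k ∨ Wseq D k = ∅) ∧
  ∀ j < k, Wseq D j ≠ Dseq D j ∧ Wseq D j ≠ ∅

/-- A digraph is acyclic iff it has no directed closed walk of positive length. -/
def DigraphAcyclic {V : Type*} (D : V → V → Prop) : Prop :=
  ∀ v : V, ∀ n : ℕ, 0 < n → ¬ walkN D n v v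

/-- `D` is a bipartite tournament with bipartition `(V1, V2)`. -/
structure IsBipartiteTournament {V : Type*} (D : V → V → Prop) (V1 V2 : Set V) : Prop where
  nonempty1 : V1.Nonempty
  nonempty2 : V2.Nonempty
  union_eq : V1 ∪ V2 = Set.univ
  disj : V1 ∩ V2 = ∅
  oriented : ∀ x ∈ V1, ∀ y ∈ V2, Xor' (D x y) (D y x)
  no_intra : ∀ x y, D x y → (x ∈ V1 ∧ y ∈ V2) ∨ (x ∈ V2 ∧ y ∈ V1)

/-- The competition graph sequence of `D` is eventually equal, starting from `q`. -/
def PeriodicFrom {V : Type*} (D : V → V → Prop) (q : ℕ) : Prop :=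
  ∃ r, 0 < r ∧ ∀ i : ℕ, cmGraph D (q + i) = cmGraph D (q + r + i)

/-- `q` is the competition index of `D`. -/
def IsCindex {V : Type*} (D : V → V → Prop) (q : ℕ) : Prop :=
  0 < q ∧ PeriodicFrom D q ∧ ∀ q', 0 < q' → PeriodicFrom D q' → q ≤ q'

/-- `p` is the competition period of `D`, given that `q` is its competition index. -/
def IsCperiod {V : Type*} (D : V → V → Prop) (q p : ℕ) : Prop :=
  0 < p ∧ cmGraph D q = cmGraph D (q + p) ∧
    ∀ p', 0 < p' → cmGraph D q = cmGraph D (q + p') → p ≤ p'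

lemma walkN_fun {V : Type*} {D : V → V → Prop} : ∀ {n : ℕ} {u v : V}, walkN D n u v →
    ∃ f : ℕ → V, f 0 = u ∧ f n = v ∧ ∀ i < n, D (f i) (f (i+1)) := by
  intro n
  induction n with
  | zero =>
    intro u v h
    exact ⟨fun _ => u, rfl, h ▸ rfl, fun i hi => absurd hi (Nat.not_lt_zero i)⟩
  | succ n ih =>
    intro u v h
    obtain ⟨w, hw, hwalk⟩ := h
    obtain ⟨f, hf0, hfn, hstep⟩ := ih hwalk
    refine ⟨fun i => if i = 0 then u else f (i-1), by simp, by simp [hfn], ?_⟩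
    intro i hi
    cases i with
    | zero => simpa [hf0] using hw
    | succ i => simpa using hstep i (by omega)

lemma walkN_of_fun {V : Type*} {D : V → V → Prop} (f : ℕ → V) :
    ∀ (d a : ℕ), (∀ i < d, D (f (a+i)) (f (a+i+1))) → walkN D d (f a) (f (a+d)) := by
  intro d
  induction d with
  | zero => intro a _; simp [walkN]
  | succ d ih =>
    intro a h
    refine ⟨f (a+1), h 0 (by omega), ?_⟩
    have := ih (a+1) (fun i hi => by
      rw [show a+1+i = a+(i+1) from by omega]
      exact h (i+1) (by omega))
    have e : a + 1 + d = a + (d + 1) := by omega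
    rwa [e] at this

lemma no_long_walk {V : Type*} [Fintype V] {D : V → V → Prop} (hacyc : DigraphAcyclic D)
    {n : ℕ} {u v : V} (hn : Fintype.card V ≤ n) : ¬ walkN D n u v := by
  intro h
  obtain ⟨f, hf0, hfn, hstep⟩ := walkN_fun h
  have hcard : Fintype.card V < Fintype.card (Fin (n+1)) := by simp; omega
  obtain ⟨a, b, hab, hfab⟩ :=
    Fintype.exists_ne_map_eq_of_card_lt (fun i : Fin (n+1) => f i) hcard
  rcases Ne.lt_or_gt hab with hlt | hlt
  · have hw := walkN_of_fun f (b - a) a (fun i hi => hstep (a+i) (by omega))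
    have e : (a : ℕ) + ((b : ℕ) - a) = b := by omega
    rw [e, ← hfab] at hw
    exact hacyc (f a) _ (by omega) hw
  · have hw := walkN_of_fun f ((a : ℕ) - b) b (fun i hi => hstep ((b : ℕ)+i) (by omega))
    have e : (b : ℕ) + ((a : ℕ) - b) = a := by omega
    rw [e, hfab] at hw
    exact hacyc (f b) _ (by omega) hw

lemma cmGraph_eq_bot {V : Type*} [Fintype V] {D : V → V → Prop} (hacyc : DigraphAcyclic D)
    {m : ℕ} (hm : Fintype.card V ≤ m) : cmGraph D m = ⊥ := by
  ext u v
  constructor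
  · rintro ⟨hne, z, h1, h2⟩
    exact no_long_walk hacyc hm h1
  · intro h; exact h.elim

/-- An acyclic bipartite tournament has competition period 1; that is,
`C^q(D) = C^{q+1}(D)` where `q` is the competition index of `D`. -/
theorem cperiod_one_of_acyclic {V : Type*} [Fintype V] (D : V → V → Prop)
    (V1 V2 : Set V) (hD : IsBipartiteTournament D V1 V2)
    (hacyc : DigraphAcyclic D)
    (q : ℕ) (hq : IsCindex D q) :
    cmGraph D q = cmGraph D (q + 1) ∧ ∀ p : ℕ, IsCperiod D q p → p = 1 := by
  obtain ⟨hq0, ⟨r, hr0, hr⟩, hmin⟩ := hq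
  have hiter : ∀ k i, cmGraph D (q + i) = cmGraph D (q + k * r + i) := by
    intro k
    induction k with
    | zero => simp
    | succ k ih =>
      intro i
      have e1 : q + k * r + i = q + (k * r + i) := by omega
      have e2 : q + r + (k * r + i) = q + (k + 1) * r + i := by ring
      rw [ih i, e1, hr (k * r + i), e2]
  have key : ∀ i, cmGraph D (q + i) = ⊥ := by
    intro i
    rw [hiter (Fintype.card V) i]
    apply cmGraph_eq_bot hacyc
    nlinarith
  have h1 : cmGraph D q = cmGraph D (q + 1) := by
    have h0 := key 0
    rw [Nat.add_zero] at h0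
    rw [h0, key 1]
  refine ⟨h1, ?_⟩
  rintro p ⟨hp0, hpeq, hpmin⟩
  have := hpmin 1 one_pos h1
  omega
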